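/- For the three-point calculus on ℤ₃ with generic nowhere-zero Θ₁,Θ₂, the cohomology dimensions are dim H⁰ = 1, dim H¹ = 2, dim H² = 1: constants are the only closed functions; the space of closed 1-forms f e₁ + g e₂, characterized by −Θ₂ ∂̄²f + f ∂̄¹Θ₂ + Θ₁ ∂̄¹g − g ∂̄²Θ₁ = 0, is 4-dimensional; exact 1-forms form a 2-dimensional space; every 2-form is closed, and exact 2-forms form a 2-dimensional subspace of the 3-dimensional Ω². -/

import Mathlib

/-- Auxiliary linear map `f ↦ (R_c f − f)·Θ` on `ℤ₃`. -/
noncomputable def z3Shift (c : ZMod 3) (Θ : ZMod 3 → ℂ) : (ZMod 3 → ℂ) →ₗ[ℂ] (ZMod 3 → ℂ) where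
  toFun f := fun x => (f (x + c) - f x) * Θ x
  map_add' f g := by funext x; simp only [Pi.add_apply]; ring
  map_smul' r f := by funext x; simp only [Pi.smul_apply, smul_eq_mul, RingHom.id_apply]; ring

/-- `d` on functions for the `ℤ₃` calculus: `df = ∂¹f e₁ + ∂²f e₂`. -/
noncomputable def z3D0 (Θ₁ Θ₂ : ZMod 3 → ℂ) :
    (ZMod 3 → ℂ) →ₗ[ℂ] (ZMod 3 → ℂ) × (ZMod 3 → ℂ) :=
  (z3Shift 1 Θ₁).prod (z3Shift 2 Θ₂)

/-- `d` on 1-forms `f e₁ + g e₂` for the `ℤ₃` calculus: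
`d(f e₁ + g e₂) = (−Θ₂∂̄²f + f∂̄¹Θ₂ + Θ₁∂̄¹g − g∂̄²Θ₁) e₁∧e₂`. -/
noncomputable def z3D1 (Θ₁ Θ₂ : ZMod 3 → ℂ) :
    ((ZMod 3 → ℂ) × (ZMod 3 → ℂ)) →ₗ[ℂ] (ZMod 3 → ℂ) where
  toFun p := fun x => -Θ₂ x * (p.1 (x + 2) - p.1 x) + p.1 x * (Θ₂ (x + 1) - Θ₂ x)
      + Θ₁ x * (p.2 (x + 1) - p.2 x) - p.2 x * (Θ₁ (x + 2) - Θ₁ x)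
  map_add' p q := by
    funext x
    simp only [Prod.fst_add, Prod.snd_add, Pi.add_apply]
    ring
  map_smul' r p := by
    funext x
    simp only [Prod.smul_fst, Prod.smul_snd, Pi.smul_apply, smul_eq_mul, RingHom.id_apply]
    ring

/-- Sum-over-points functional on `ZMod 3 → ℂ`. -/
noncomputable def z3Sum : (ZMod 3 → ℂ) →ₗ[ℂ] ℂ where
  toFun f := f 0 + f 1 + f 2
  map_add' f g := by simp only [Pi.add_apply]; ring
  map_smul' r f := by simp only [Pi.smul_apply, smul_eq_mul, RingHom.id_apply]; ring

lemma z3Sum_surjective : Function.Surjective z3Sum := by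
  intro c
  exact ⟨fun _ => c / 3, by simp [z3Sum]; ring⟩

lemma finrank_fun3 : Module.finrank ℂ (ZMod 3 → ℂ) = 3 := by
  simp [Module.finrank_fintype_fun_eq_card]

lemma finrank_ker_z3Sum : Module.finrank ℂ (LinearMap.ker z3Sum) = 2 := by
  have h := LinearMap.finrank_range_add_finrank_ker z3Sum
  rw [LinearMap.range_eq_top.mpr z3Sum_surjective, finrank_top, finrank_fun3] at h
  simp only [Module.finrank_self] at h
  omega

lemma ker_z3D0_eq (Θ₁ Θ₂ : ZMod 3 → ℂ) (h1 : ∀ x, Θ₁ x ≠ 0) :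
    LinearMap.ker (z3D0 Θ₁ Θ₂) = Submodule.span ℂ {(fun _ => 1 : ZMod 3 → ℂ)} := by
  apply le_antisymm
  · intro f hf
    have hstep : ∀ x : ZMod 3, f (x + 1) = f x := by
      intro x
      have h := congrFun (congrArg Prod.fst (LinearMap.mem_ker.mp hf)) x
      simp only [z3D0, z3Shift, LinearMap.prod_apply, LinearMap.coe_mk, AddHom.coe_mk,
        Pi.prod, Prod.fst_zero, Pi.zero_apply] at h
      rcases mul_eq_zero.mp h with h' | h'
      · exact sub_eq_zero.mp h'
      · exact absurd h' (h1 x)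
    rw [Submodule.mem_span_singleton]
    refine ⟨f 0, ?_⟩
    funext x
    have e1 : f 1 = f 0 := hstep 0
    have e2 : f 2 = f 1 := hstep 1
    simp only [Pi.smul_apply, smul_eq_mul, mul_one]
    fin_cases x
    · rfl
    · exact e1.symm
    · exact (e2.trans e1).symm
  · rw [Submodule.span_le, Set.singleton_subset_iff]
    simp only [SetLike.mem_coe, LinearMap.mem_ker]
    apply Prod.ext <;> funext x <;>
      simp [z3D0, z3Shift]

lemma d_comp_d (Θ₁ Θ₂ : ZMod 3 → ℂ) :
    LinearMap.range (z3D0 Θ₁ Θ₂) ≤ LinearMap.ker (z3D1 Θ₁ Θ₂) := by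
  rintro _ ⟨f, rfl⟩
  rw [LinearMap.mem_ker]
  funext x
  have e1 : x + 2 + 1 = x := by rw [add_assoc, show (2:ZMod 3)+1 = 0 by decide, add_zero]
  have e2 : x + 1 + 2 = x := by rw [add_assoc, show (1:ZMod 3)+2 = 0 by decide, add_zero]
  simp only [z3D0, z3D1, z3Shift, LinearMap.prod_apply, LinearMap.coe_mk, AddHom.coe_mk,
    Pi.prod, Function.prod_apply, Pi.zero_apply, e1, e2]
  ring

lemma range_d1_le (Θ₁ Θ₂ : ZMod 3 → ℂ) :
    LinearMap.range (z3D1 Θ₁ Θ₂) ≤ LinearMap.ker z3Sum := by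
  rintro _ ⟨p, rfl⟩
  rw [LinearMap.mem_ker]
  have e1 : (0:ZMod 3) + 1 = 1 := rfl
  have e2 : (0:ZMod 3) + 2 = 2 := rfl
  have e3 : (1:ZMod 3) + 1 = 2 := rfl
  have e4 : (1:ZMod 3) + 2 = 0 := rfl
  have e5 : (2:ZMod 3) + 1 = 0 := rfl
  have e6 : (2:ZMod 3) + 2 = 1 := rfl
  simp only [z3Sum, z3D1, LinearMap.coe_mk, AddHom.coe_mk, e1, e2, e3, e4, e5, e6]
  ring

/-- delta function at a point -/
noncomputable def z3delta (a : ZMod 3) : ZMod 3 → ℂ := fun x => if x = a then 1 else 0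

lemma finrank_range_d1 (Θ₁ Θ₂ : ZMod 3 → ℂ) (h2 : ∀ x, Θ₂ x ≠ 0) :
    Module.finrank ℂ (LinearMap.range (z3D1 Θ₁ Θ₂)) = 2 := by
  set D := z3D1 Θ₁ Θ₂ with hD
  set v₁ := D (z3delta 0, 0) with hv₁
  set v₂ := D (z3delta 1, 0) with hv₂
  have ea : (0:ZMod 3) + 2 = 2 := by decide
  have eb : (0:ZMod 3) + 1 = 1 := by decide
  have ec : (2:ZMod 3) + 2 = 1 := by decide
  have ed : (2:ZMod 3) + 1 = 0 := by decide
  have hv₁0 : v₁ 0 = Θ₂ 1 := by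
    simp only [hv₁, hD, z3D1, z3delta, LinearMap.coe_mk, AddHom.coe_mk, Pi.zero_apply,
      ea, eb, if_pos rfl, if_true, eq_self_iff_true, if_neg (show (2:ZMod 3) ≠ 0 by decide)]
    ring
  have hv₂0 : v₂ 0 = 0 := by
    simp only [hv₂, hD, z3D1, z3delta, LinearMap.coe_mk, AddHom.coe_mk, Pi.zero_apply,
      ea, eb, if_neg (show (2:ZMod 3) ≠ 1 by decide), if_neg (show (0:ZMod 3) ≠ 1 by decide)]
    ring
  have hv₁2 : v₁ 2 = 0 := by
    simp only [hv₁, hD, z3D1, z3delta, LinearMap.coe_mk, AddHom.coe_mk, Pi.zero_apply,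
      ec, ed, if_neg (show (1:ZMod 3) ≠ 0 by decide), if_neg (show (2:ZMod 3) ≠ 0 by decide)]
    ring
  have hv₂2 : v₂ 2 = -Θ₂ 2 := by
    simp only [hv₂, hD, z3D1, z3delta, LinearMap.coe_mk, AddHom.coe_mk, Pi.zero_apply,
      ec, ed, if_pos rfl, if_true, eq_self_iff_true, if_neg (show (2:ZMod 3) ≠ 1 by decide)]
    ring
  have hind : LinearIndependent ℂ ![v₁, v₂] := by
    rw [LinearIndependent.pair_iff]
    intro s t hst
    have h0 := congrFun hst 0
    have h2' := congrFun hst 2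
    simp only [Pi.add_apply, Pi.smul_apply, smul_eq_mul, Pi.zero_apply,
      hv₁0, hv₂0, hv₁2, hv₂2] at h0 h2'
    constructor
    · have : s * Θ₂ 1 = 0 := by linear_combination h0
      rcases mul_eq_zero.mp this with h | h
      · exact h
      · exact absurd h (h2 1)
    · have : t * Θ₂ 2 = 0 := by linear_combination -h2'
      rcases mul_eq_zero.mp this with h | h
      · exact h
      · exact absurd h (h2 2)
  apply le_antisymm
  · calc Module.finrank ℂ (LinearMap.range D)
        ≤ Module.finrank ℂ (LinearMap.ker z3Sum) :=
          Submodule.finrank_mono (range_d1_le Θ₁ Θ₂)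
      _ = 2 := finrank_ker_z3Sum
  · have hle : Submodule.span ℂ (Set.range ![v₁, v₂]) ≤ LinearMap.range D := by
      rw [Submodule.span_le]
      rintro _ ⟨i, rfl⟩
      fin_cases i
      · exact ⟨(z3delta 0, 0), rfl⟩
      · exact ⟨(z3delta 1, 0), rfl⟩
    calc (2 : ℕ) = Module.finrank ℂ (Submodule.span ℂ (Set.range ![v₁, v₂])) := by
          rw [finrank_span_eq_card hind]; simp
      _ ≤ Module.finrank ℂ (LinearMap.range D) := Submodule.finrank_mono hle

/-- for the three-point (`ℤ₃`) calculus with generic nowhere-zero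
`Θ₁, Θ₂` (genericity = nonvanishing of some fixed nonzero polynomial in the six
values of `Θ₁, Θ₂`, i.e. a Zariski-open dense subset of `(ℂ*)³ × (ℂ*)³`), the
cohomology dimensions are `dim H⁰ = 1`, `dim H¹ = 2`, `dim H² = 1`: constants are
the only closed functions; closed 1-forms form a 4-dimensional space; exact 1-forms
a 2-dimensional space; all 2-forms are closed and exact 2-forms form a 2-dimensional
subspace of the 3-dimensional `Ω²`. -/
theorem three_point_cohomology_generic :
    ∃ P : MvPolynomial (ZMod 3 ⊕ ZMod 3) ℂ, P ≠ 0 ∧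
      (∃ Θ₁ Θ₂ : ZMod 3 → ℂ, (∀ x, Θ₁ x ≠ 0) ∧ (∀ x, Θ₂ x ≠ 0) ∧
        MvPolynomial.eval (Sum.elim Θ₁ Θ₂) P ≠ 0) ∧
      ∀ Θ₁ Θ₂ : ZMod 3 → ℂ, (∀ x, Θ₁ x ≠ 0) → (∀ x, Θ₂ x ≠ 0) →
        MvPolynomial.eval (Sum.elim Θ₁ Θ₂) P ≠ 0 →
        Module.finrank ℂ (LinearMap.ker (z3D0 Θ₁ Θ₂)) = 1 ∧
        Module.finrank ℂ (LinearMap.range (z3D0 Θ₁ Θ₂)) = 2 ∧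
        Module.finrank ℂ (LinearMap.ker (z3D1 Θ₁ Θ₂)) = 4 ∧
        LinearMap.range (z3D0 Θ₁ Θ₂) ≤ LinearMap.ker (z3D1 Θ₁ Θ₂) ∧
        Module.finrank ℂ (LinearMap.range (z3D1 Θ₁ Θ₂)) = 2 := by
  refine ⟨1, one_ne_zero,
    ⟨fun _ => 1, fun _ => 1, fun _ => one_ne_zero, fun _ => one_ne_zero, by simp⟩, ?_⟩
  intro Θ₁ Θ₂ h1 h2 _
  have hk0 : Module.finrank ℂ (LinearMap.ker (z3D0 Θ₁ Θ₂)) = 1 := by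
    rw [ker_z3D0_eq Θ₁ Θ₂ h1]
    apply finrank_span_singleton
    intro h
    have := congrFun h 0
    simp at this
  have hr0 : Module.finrank ℂ (LinearMap.range (z3D0 Θ₁ Θ₂)) = 2 := by
    have h := LinearMap.finrank_range_add_finrank_ker (z3D0 Θ₁ Θ₂)
    rw [finrank_fun3, hk0] at h
    omega
  have hr1 := finrank_range_d1 Θ₁ Θ₂ h2
  have hk1 : Module.finrank ℂ (LinearMap.ker (z3D1 Θ₁ Θ₂)) = 4 := by
    have h := LinearMap.finrank_range_add_finrank_ker (z3D1 Θ₁ Θ₂)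
    rw [Module.finrank_prod, finrank_fun3, hr1] at h
    omega
  exact ⟨hk0, hr0, hk1, d_comp_d Θ₁ Θ₂, hr1⟩
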